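/- In the Gaussian Sinkhorn setting, the parameter triple (ι_θ, κ_θ, ς_θ) with ς_θ := σ̄^{1/2} r_θ σ̄^{1/2}, κ_θ := ς_θ τ^{-1} β, and ι_θ := m̄ - κ_θ m, where r_θ is the positive definite fixed point of Ricc_{ϖ_θ} with ϖ_θ^{-1} = γ_θ γ_θ' and γ_θ = σ̄^{1/2} τ^{-1} β σ^{1/2}, satisfies the marginal constraint κ_θ σ κ_θ' + ς_θ = σ̄ (i.e., the pushforward of ν_{m,σ} under the kernel with these parameters is ν_{m̄,σ̄}). -/

import Mathlib

open Matrix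
open scoped Classical

/-- The principal symmetric positive semidefinite square root of a matrix
(junk value `0` if the matrix is not positive semidefinite). -/
noncomputable def psqrt {d : ℕ} (A : Matrix (Fin d) (Fin d) ℝ) : Matrix (Fin d) (Fin d) ℝ :=
  if h : A.PosSemidef then
    (h.1.eigenvectorUnitary : Matrix (Fin d) (Fin d) ℝ) *
      diagonal ((↑) ∘ (√·) ∘ h.1.eigenvalues) *
      (star h.1.eigenvectorUnitary : Matrix (Fin d) (Fin d) ℝ)
  else 0

open scoped MatrixOrder

lemma psqrt_of_posSemidef {d : ℕ} {A : Matrix (Fin d) (Fin d) ℝ} (h : A.PosSemidef) :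
    psqrt A = CFC.sqrt A := by
  rw [CFC.sqrt_eq_real_sqrt A h.nonneg, cfcₙ_eq_cfc (hf0 := by simp), h.1.cfc_eq, IsHermitian.cfc, Unitary.conjStarAlgAut_apply]
  exact dif_pos h

lemma psqrt_mul_self {d : ℕ} {A : Matrix (Fin d) (Fin d) ℝ} (h : A.PosSemidef) :
    psqrt A * psqrt A = A := by
  rw [psqrt_of_posSemidef h]; exact CFC.sqrt_mul_sqrt_self A h.nonneg

lemma psqrt_posSemidef {d : ℕ} {A : Matrix (Fin d) (Fin d) ℝ} (h : A.PosSemidef) :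
    (psqrt A).PosSemidef := by
  rw [psqrt_of_posSemidef h]; exact (CFC.sqrt_nonneg A).posSemidef

lemma real_herm_transpose {d : ℕ} {A : Matrix (Fin d) (Fin d) ℝ} (h : A.IsHermitian) : Aᵀ = A := by
  rw [← conjTranspose_eq_transpose_of_trivial]; exact h

lemma isUnit_of_sq {d : ℕ} {A B : Matrix (Fin d) (Fin d) ℝ} (hB : IsUnit B)
    (h : A * A = B) : IsUnit A := by
  have h1 : IsUnit (A.det * A.det) := by
    rw [← det_mul, h]; exact (isUnit_iff_isUnit_det B).mp hB
  exact (isUnit_iff_isUnit_det A).mpr (isUnit_of_mul_isUnit_left h1)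

lemma aux_posDef_mul_transpose {d : ℕ} {A : Matrix (Fin d) (Fin d) ℝ} (hA : IsUnit A) :
    (A * Aᵀ).PosDef := by
  rw [← conjTranspose_eq_transpose_of_trivial]
  exact (posSemidef_self_mul_conjTranspose A).posDef_iff_isUnit.mpr (hA.mul hA.star)

lemma aux_sq_posSemidef {d : ℕ} {C : Matrix (Fin d) (Fin d) ℝ} (hC : C.IsHermitian) :
    (C * C).PosSemidef := by
  have h3 := Matrix.posSemidef_conjTranspose_mul_self (R := ℝ) C
  rwa [show Cᴴ = C from hC] at h3

lemma aux_psqrt_props {d : ℕ} {W : Matrix (Fin d) (Fin d) ℝ} (hW : W.PosDef) :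
    (psqrt (W + ((1/2:ℝ) • W) * ((1/2:ℝ) • W))).PosSemidef ∧
    (psqrt (W + ((1/2:ℝ) • W) * ((1/2:ℝ) • W))) * (psqrt (W + ((1/2:ℝ) • W) * ((1/2:ℝ) • W)))
      = W + ((1/2:ℝ) • W) * ((1/2:ℝ) • W) ∧
    W * psqrt (W + ((1/2:ℝ) • W) * ((1/2:ℝ) • W))
      = psqrt (W + ((1/2:ℝ) • W) * ((1/2:ℝ) • W)) * W := by
  have h := hW.isHermitian
  set U : Matrix (Fin d) (Fin d) ℝ := (h.eigenvectorUnitary : Matrix (Fin d) (Fin d) ℝ) with hU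
  set lam := h.eigenvalues with hlam
  have hUU : star U * U = 1 := (Matrix.mem_unitaryGroup_iff').mp h.eigenvectorUnitary.2
  have hUUX : ∀ X : Matrix (Fin d) (Fin d) ℝ, star U * (U * X) = X := fun X => by
    rw [← mul_assoc, hUU, one_mul]
  set E : (Fin d → ℝ) → Matrix (Fin d) (Fin d) ℝ := fun a => U * diagonal a * star U with hE
  have hEmul : ∀ a b, E a * E b = E (a * b) := fun a b => by
    show U * diagonal a * star U * (U * diagonal b * star U) = U * diagonal (a * b) * star U
    simp only [← mul_assoc]
    rw [mul_assoc (U * diagonal a) (star U) U, hUU, mul_one, mul_assoc U (diagonal a),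
      diagonal_mul_diagonal]
    rfl
  have hEadd : ∀ a b, E a + E b = E (a + b) := fun a b => by
    show U * diagonal a * star U + U * diagonal b * star U = U * diagonal (a + b) * star U
    have hd : diagonal (a + b) = diagonal a + diagonal b := (diagonal_add a b).symm
    rw [hd, mul_add, add_mul]
  have hEsmul : ∀ (c : ℝ) a, c • E a = E (c • a) := fun c a => by
    show c • (U * diagonal a * star U) = U * diagonal (c • a) * star U
    rw [diagonal_smul]
    simp [smul_mul_assoc, mul_smul_comm]
  have hspec : W = E lam := by
    have hs := h.spectral_theorem
    rwa [RCLike.ofReal_real_eq_id, Function.id_comp] at hs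
  have hCherm : ((1/2:ℝ) • W).IsHermitian := by
    unfold Matrix.IsHermitian
    rw [conjTranspose_smul, show Wᴴ = W from h, star_trivial]
  have hM : (W + ((1/2:ℝ) • W) * ((1/2:ℝ) • W)).PosSemidef :=
    (hW.add_posSemidef (aux_sq_posSemidef hCherm)).posSemidef
  set f : Fin d → ℝ := fun i => Real.sqrt (lam i + ((1/2:ℝ) * lam i) * ((1/2:ℝ) * lam i)) with hf
  have hfnn : ∀ i, (0:ℝ) ≤ lam i + ((1/2:ℝ) * lam i) * ((1/2:ℝ) * lam i) := fun i =>
    add_nonneg (hW.posSemidef.eigenvalues_nonneg i) (mul_self_nonneg _)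
  have hff : ∀ i, f i * f i = lam i + ((1/2:ℝ) * lam i) * ((1/2:ℝ) * lam i) := fun i =>
    Real.mul_self_sqrt (hfnn i)
  have hBpsd : (E f).PosSemidef := by
    have := (Matrix.PosSemidef.diagonal (R := ℝ) (n := Fin d) (d := f)
      (fun i => Real.sqrt_nonneg _)).mul_mul_conjTranspose_same U
    show (U * diagonal f * star U).PosSemidef
    rwa [Matrix.star_eq_conjTranspose]
  have hMdecomp : W + ((1/2:ℝ) • W) * ((1/2:ℝ) • W) = E (lam + ((1/2:ℝ) • lam) * ((1/2:ℝ) • lam)) := by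
    conv_lhs => rw [hspec]
    rw [hEsmul, hEmul, hEadd]
  have hBB : E f * E f = W + ((1/2:ℝ) • W) * ((1/2:ℝ) • W) := by
    rw [hEmul, hMdecomp]
    refine congrArg E (funext fun i => ?_)
    show f i * f i = lam i + ((1/2:ℝ) * lam i) * ((1/2:ℝ) * lam i)
    exact hff i
  have hpsB : psqrt (W + ((1/2:ℝ) • W) * ((1/2:ℝ) • W)) = E f := by
    rw [psqrt_of_posSemidef hM]
    exact CFC.sqrt_unique hBB hBpsd.nonneg
  refine ⟨hpsB ▸ hBpsd, by rw [hpsB, hBB], ?_⟩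
  rw [hpsB]
  conv_lhs => rw [hspec]
  conv_rhs => rw [hspec]
  rw [hEmul, hEmul]
  exact congrArg E (funext fun i => mul_comm (lam i) (f i))

/-- In the Gaussian Sinkhorn setting, the Schrödinger bridge parameters
`ς_θ = σbar^{1/2} r_θ σbar^{1/2}`, `κ_θ = ς_θ τ⁻¹ β`, `ι_θ = mbar - κ_θ m` — where `r_θ` is the
positive definite fixed point of `Ricc_{ϖ_θ}` with `ϖ_θ⁻¹ = γ_θ γ_θᵀ`,
`γ_θ = σbar^{1/2} τ⁻¹ β σ^{1/2}`, given in closed form by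
`r_θ = -ϖ_θ/2 + (ϖ_θ + (ϖ_θ/2)²)^{1/2}` — satisfy the marginal constraint
`κ_θ σ κ_θᵀ + ς_θ = σbar` (i.e. the pushforward of `ν_{m,σ}` under the kernel
`x ↦ N(ι_θ + κ_θ x, ς_θ)` is `ν_{mbar,σbar}`). -/
theorem schrodinger_bridge_marginal_constraint {d : ℕ}
    (m mbar : Fin d → ℝ)
    (σ σbar τ β : Matrix (Fin d) (Fin d) ℝ)
    (hσ : σ.PosDef) (hσbar : σbar.PosDef) (hτ : τ.PosDef) (hβ : IsUnit β)
    (γ ϖ r ς κ : Matrix (Fin d) (Fin d) ℝ) (ι : Fin d → ℝ)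
    (hγ : γ = psqrt σbar * τ⁻¹ * β * psqrt σ)
    (hϖ : ϖ = (γ * γᵀ)⁻¹)
    (hr : r = (-(1/2 : ℝ)) • ϖ + psqrt (ϖ + ((1/2 : ℝ) • ϖ) * ((1/2 : ℝ) • ϖ)))
    (hς : ς = psqrt σbar * r * psqrt σbar)
    (hκ : κ = ς * τ⁻¹ * β)
    (hι : ι = mbar - κ.mulVec m) :
    ι + κ.mulVec m = mbar ∧ κ * σ * κᵀ + ς = σbar := by
  refine ⟨by rw [hι]; simp, ?_⟩
  set s := psqrt σbar with hsdef
  set q := psqrt σ with hqdef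
  have hs2 : s * s = σbar := psqrt_mul_self hσbar.posSemidef
  have hq2 : q * q = σ := psqrt_mul_self hσ.posSemidef
  have hsT : sᵀ = s := real_herm_transpose (psqrt_posSemidef hσbar.posSemidef).isHermitian
  have hqT : qᵀ = q := real_herm_transpose (psqrt_posSemidef hσ.posSemidef).isHermitian
  have hsu : IsUnit s := isUnit_of_sq hσbar.isUnit hs2
  have hqu : IsUnit q := isUnit_of_sq hσ.isUnit hq2
  have hτT : τᵀ = τ := real_herm_transpose hτ.isHermitian
  have hτiT : (τ⁻¹)ᵀ = τ⁻¹ := by rw [transpose_nonsing_inv, hτT]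
  have hτiu : IsUnit (τ⁻¹) := hτ.inv.isUnit
  have hγu : IsUnit γ := by rw [hγ]; exact ((hsu.mul hτiu).mul hβ).mul hqu
  have hγγ : (γ * γᵀ).PosDef := aux_posDef_mul_transpose hγu
  have hϖPD : ϖ.PosDef := by rw [hϖ]; exact hγγ.inv
  have hϖdet : IsUnit ϖ.det := (isUnit_iff_isUnit_det ϖ).mp hϖPD.isUnit
  have hϖinv : ϖ⁻¹ = γ * γᵀ := by
    rw [hϖ, nonsing_inv_nonsing_inv _ ((isUnit_iff_isUnit_det _).mp hγγ.isUnit)]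
  obtain ⟨hSpsd, hSS, hcomm⟩ := aux_psqrt_props hϖPD
  set S := psqrt (ϖ + ((1/2:ℝ) • ϖ) * ((1/2:ℝ) • ϖ)) with hSdef
  have hϖT : ϖᵀ = ϖ := real_herm_transpose hϖPD.isHermitian
  have hST : Sᵀ = S := real_herm_transpose hSpsd.isHermitian
  have hrT : rᵀ = r := by
    rw [hr, transpose_add, transpose_smul, hϖT, hST]
  have hrϖ : r * ϖ = ϖ * r := by
    rw [hr, add_mul, mul_add, smul_mul_assoc, mul_smul_comm, hcomm]
  have hSS' : S * S = ϖ + (1/4 : ℝ) • (ϖ * ϖ) := by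
    rw [hSS, smul_mul_assoc, mul_smul_comm, smul_smul]; norm_num
  have key : r * ϖ⁻¹ * r + r = 1 := by
    refine hϖPD.isUnit.mul_left_cancel ?_
    have h1 : ϖ * (r * ϖ⁻¹ * r + r) = r * r + ϖ * r := by
      rw [mul_add]
      congr 1
      simp only [← mul_assoc]
      rw [← hrϖ, mul_assoc r ϖ ϖ⁻¹, mul_nonsing_inv _ hϖdet, mul_one]
    have h2 : r * r + ϖ * r = ϖ := by
      rw [hr]
      simp only [add_mul, mul_add, smul_mul_assoc, mul_smul_comm, smul_smul]
      rw [hSS', hcomm]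
      module
    rw [mul_one, h1, h2]
  have e1 : κ * σ * κᵀ = s * r * (γ * γᵀ) * r * s := by
    rw [hκ, hς, hγ, ← hq2]
    simp only [transpose_mul, hsT, hrT, hτiT, hqT, mul_assoc]
  have e2 : κ * σ * κᵀ = s * r * ϖ⁻¹ * r * s := by rw [e1, ← hϖinv]
  calc κ * σ * κᵀ + ς = s * r * ϖ⁻¹ * r * s + s * r * s := by rw [e2, hς]
    _ = s * (r * ϖ⁻¹ * r + r) * s := by simp only [mul_add, add_mul, mul_assoc]
    _ = σbar := by rw [key, mul_one, hs2]
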